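/- In the STRIPS instance of the Bylander-style construction with initial state ∅ (i.e., after deleting a), there exists a plan achieving goal {c₁,…,c_k} if and only if the clause set F is satisfiable. -/

import Mathlib

/-- A STRIPS operator `(φ, η, α, β)`: positive preconditions `pre`, negative
preconditions `npre`, positive effects `add`, negative effects `del`. -/
structure Op (C : Type*) where
  pre : Finset C
  npre : Finset C
  add : Finset C
  del : Finset C

/-- `Reaches S L S'` holds when the operator sequence `L` is executable from state `S`
(each operator `(φ,η,α,β)` is executable in a state `T` iff `φ ⊆ T` and `η ∩ T = ∅`,
and transforms `T` into `(T ∪ α) \ β`) and leads to state `S'`. -/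
inductive Reaches {C : Type*} [DecidableEq C] : Finset C → List (Op C) → Finset C → Prop
  | nil (S : Finset C) : Reaches S [] S
  | cons {S S' : Finset C} (o : Op C) (L : List (Op C)) :
      o.pre ⊆ S → (∀ c ∈ o.npre, c ∉ S) →
      Reaches ((S ∪ o.add) \ o.del) L S' → Reaches S (o :: L) S'

/-- Conditions of the Bylander-style instance: `A`, `T i`, `Fc i` (for `tᵢ`, `fᵢ`) and
`C j` (for `c_j`). -/
inductive Cond
  | A
  | T (i : ℕ)
  | Fc (i : ℕ)
  | C (j : ℕ)
deriving DecidableEq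

/-- The condition `tᵢ` or `fᵢ` corresponding to a literal. -/
def condOfLit (l : ℕ × Bool) : Cond := if l.2 then Cond.T l.1 else Cond.Fc l.1

/-- The operator `e = ({a}, ∅, {c₁,…,c_k}, ∅)`. -/
def eOp (k : ℕ) : Op Cond := ⟨{Cond.A}, ∅, (Finset.range k).image Cond.C, ∅⟩

/-- The operators of the Bylander-style instance built from the clauses `γ 0, …, γ (k-1)`
over variables `x_0, …, x_(n-1)`: `plᵢ = (∅,{fᵢ,a},{tᵢ},∅)`, `nlᵢ = (∅,{tᵢ,a},{fᵢ},∅)`,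
for each occurrence of a literal `l` in clause `γ j` an operator `({cond l},∅,{c_j},∅)`,
and `e = ({a},∅,{c₁,…,c_k},∅)`. -/
def Ops (n k : ℕ) (γ : ℕ → Finset (ℕ × Bool)) : Set (Op Cond) :=
  {o | (∃ i < n, o = ⟨∅, {Cond.Fc i, Cond.A}, {Cond.T i}, ∅⟩) ∨
       (∃ i < n, o = ⟨∅, {Cond.T i, Cond.A}, {Cond.Fc i}, ∅⟩) ∨
       (∃ j < k, ∃ l ∈ γ j, o = ⟨{condOfLit l}, ∅, {Cond.C j}, ∅⟩) ∨
       o = eOp k}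


lemma reaches_trans {C : Type*} [DecidableEq C] {S S' S'' : Finset C} {L L' : List (Op C)}
    (h : Reaches S L S') (h' : Reaches S' L' S'') : Reaches S (L ++ L') S'' := by
  induction h with
  | nil => simpa
  | cons o L hp hn _ ih => exact Reaches.cons o _ hp hn (ih h')

lemma fwd (n k : ℕ) (γ : ℕ → Finset (ℕ × Bool)) :
    ∀ (L : List (Op Cond)) (S S' : Finset Cond),
    (∀ o ∈ L, o ∈ Ops n k γ) → Reaches S L S' → Cond.A ∉ S →
    (∀ i, ¬(Cond.T i ∈ S ∧ Cond.Fc i ∈ S)) →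
    (∀ j < k, Cond.C j ∈ S → ∃ l ∈ γ j, condOfLit l ∈ S) →
    (∀ i, ¬(Cond.T i ∈ S' ∧ Cond.Fc i ∈ S')) ∧
      (∀ j < k, Cond.C j ∈ S' → ∃ l ∈ γ j, condOfLit l ∈ S') := by
  intro L
  induction L with
  | nil =>
    intro S S' _ hR hA hTF hG
    cases hR
    exact ⟨hTF, hG⟩
  | cons o L ih =>
    intro S S' hL hR hA hTF hG
    cases hR with
    | cons _ _ hpre hnpre hR' =>
      have hLrest : ∀ o ∈ L, o ∈ Ops n k γ := fun o ho => hL o (List.mem_cons_of_mem _ ho)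
      rcases hL o List.mem_cons_self with ⟨i, hi, rfl⟩ | ⟨i, hi, rfl⟩ | ⟨j, hj, l, hl, rfl⟩ | rfl
      · -- pl i
        simp only at hR'
        have hFc : Cond.Fc i ∉ S := hnpre _ (by simp)
        refine ih _ _ hLrest hR' (by simp [hA]) ?_ ?_
        · intro i' ⟨h1, h2⟩
          simp only [Finset.sdiff_empty, Finset.mem_union, Finset.mem_singleton] at h1 h2
          rcases h2 with h2 | h2
          · rcases h1 with h1 | h1
            · exact hTF i' ⟨h1, h2⟩
            · cases h1; exact hFc h2
          · cases h2
        · intro j hj hCj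
          simp only [Finset.sdiff_empty, Finset.mem_union, Finset.mem_singleton] at hCj
          rcases hCj with hCj | hCj
          · obtain ⟨l, hl, hc⟩ := hG j hj hCj
            exact ⟨l, hl, by simp [hc]⟩
          · cases hCj
      · -- nl i
        simp only at hR'
        have hT : Cond.T i ∉ S := hnpre _ (by simp)
        refine ih _ _ hLrest hR' (by simp [hA]) ?_ ?_
        · intro i' ⟨h1, h2⟩
          simp only [Finset.sdiff_empty, Finset.mem_union, Finset.mem_singleton] at h1 h2
          rcases h1 with h1 | h1
          · rcases h2 with h2 | h2
            · exact hTF i' ⟨h1, h2⟩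
            · cases h2; exact hT h1
          · cases h1
        · intro j hj hCj
          simp only [Finset.sdiff_empty, Finset.mem_union, Finset.mem_singleton] at hCj
          rcases hCj with hCj | hCj
          · obtain ⟨l, hl, hc⟩ := hG j hj hCj
            exact ⟨l, hl, by simp [hc]⟩
          · cases hCj
      · -- clause op
        simp only at hR'
        have hc : condOfLit l ∈ S := hpre (by simp)
        refine ih _ _ hLrest hR' ?_ ?_ ?_
        · simp only [Finset.sdiff_empty, Finset.mem_union, Finset.mem_singleton]
          rintro (h | h)
          · exact hA h
          · cases h
        · intro i' ⟨h1, h2⟩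
          simp only [Finset.sdiff_empty, Finset.mem_union, Finset.mem_singleton] at h1 h2
          rcases h1 with h1 | h1
          · rcases h2 with h2 | h2
            · exact hTF i' ⟨h1, h2⟩
            · cases h2
          · cases h1
        · intro j' hj' hCj
          simp only [Finset.sdiff_empty, Finset.mem_union, Finset.mem_singleton] at hCj
          rcases hCj with hCj | hCj
          · obtain ⟨l', hl', hc'⟩ := hG j' hj' hCj
            exact ⟨l', hl', by simp [hc']⟩
          · injection hCj with h; subst h
            exact ⟨l, hl, by simp [hc]⟩
      · -- e
        exact absurd (hpre (by simp [eOp])) hA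

section bwd
variable (I : ℕ → Bool)

/-- state-setting op for variable i -/
def pick (i : ℕ) : Op Cond :=
  if I i then ⟨∅, {Cond.Fc i, Cond.A}, {Cond.T i}, ∅⟩
  else ⟨∅, {Cond.T i, Cond.A}, {Cond.Fc i}, ∅⟩

def fI (i : ℕ) : Cond := if I i then Cond.T i else Cond.Fc i

lemma fI_ne_A (i : ℕ) : fI I i ≠ Cond.A := by
  unfold fI; split <;> simp

lemma b1 : ∀ b a : ℕ, Reaches ((Finset.range a).image (fI I))
    ((List.range' a b).map (pick I)) ((Finset.range (a + b)).image (fI I)) := by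
  intro b
  induction b with
  | zero => intro a; simpa using Reaches.nil _
  | succ b ih =>
    intro a
    rw [List.range'_succ, List.map_cons]
    have hnpre : ∀ c ∈ (pick I a).npre, c ∉ (Finset.range a).image (fI I) := by
      intro c hc hmem
      simp only [Finset.mem_image, Finset.mem_range] at hmem
      obtain ⟨i, hi, hfi⟩ := hmem
      unfold pick at hc
      unfold fI at hfi
      split at hc <;> simp only [Finset.mem_insert, Finset.mem_singleton] at hc <;>
        rcases hc with rfl | rfl <;> split at hfi <;> simp_all
    have hpre : (pick I a).pre ⊆ (Finset.range a).image (fI I) := by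
      unfold pick; split <;> simp
    have hstate : (((Finset.range a).image (fI I)) ∪ (pick I a).add) \ (pick I a).del
        = (Finset.range (a + 1)).image (fI I) := by
      unfold pick
      split <;> rename_i h <;>
        (ext x; simp [Finset.range_add_one, fI, h, or_comm])
    refine Reaches.cons _ _ hpre hnpre ?_
    rw [hstate]
    have := ih (a + 1)
    rw [show a + 1 + b = a + (b + 1) by omega] at this
    exact this

end bwd

lemma addClauses (n k : ℕ) (γ : ℕ → Finset (ℕ × Bool)) (I : ℕ → Bool)
    (hvars : ∀ j < k, ∀ l ∈ γ j, l.1 < n)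
    (hsat : ∀ j < k, ∃ l ∈ γ j, I l.1 = l.2) :
    ∀ m, m ≤ k → ∀ S : Finset Cond, (Finset.range n).image (fI I) ⊆ S →
    ∃ L S', (∀ o ∈ L, o ∈ Ops n k γ) ∧ Reaches S L S' ∧ S ⊆ S' ∧ ∀ j < m, Cond.C j ∈ S' := by
  intro m
  induction m with
  | zero => intro _ S _; exact ⟨[], S, by simp, Reaches.nil S, subset_rfl, by simp⟩
  | succ m ih =>
    intro hm S hS
    obtain ⟨L, S', hL, hR, hSS', hC⟩ := ih (by omega) S hS
    obtain ⟨l, hl, hIl⟩ := hsat m (by omega)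
    have hcond : condOfLit l ∈ S' := by
      apply hSS'
      apply hS
      simp only [Finset.mem_image, Finset.mem_range]
      refine ⟨l.1, hvars m (by omega) l hl, ?_⟩
      unfold fI condOfLit
      rw [hIl]
    refine ⟨L ++ [⟨{condOfLit l}, ∅, {Cond.C m}, ∅⟩], (S' ∪ {Cond.C m}) \ ∅, ?_, ?_, ?_, ?_⟩
    · intro o ho
      rcases List.mem_append.1 ho with h | h
      · exact hL o h
      · simp only [List.mem_singleton] at h
        subst h
        exact Or.inr (Or.inr (Or.inl ⟨m, by omega, l, hl, rfl⟩))
    · refine reaches_trans hR ?_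
      refine Reaches.cons _ _ (by simpa using hcond) (by simp) ?_
      simpa using Reaches.nil _
    · intro c hc
      simp only [Finset.sdiff_empty, Finset.mem_union]
      exact Or.inl (hSS' hc)
    · intro j hj
      simp only [Finset.sdiff_empty, Finset.mem_union, Finset.mem_singleton]
      rcases Nat.lt_succ_iff_lt_or_eq.1 hj with h | h
      · exact Or.inl (hC j h)
      · exact Or.inr (by rw [h])

/-- In the Bylander-style instance with initial state `∅` (i.e., after deleting `a`),
there exists a plan achieving the goal `{c₁,…,c_k}` iff the clause set is satisfiable. -/
theorem stmt16 (n k : ℕ) (γ : ℕ → Finset (ℕ × Bool))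
    (hvars : ∀ j < k, ∀ l ∈ γ j, l.1 < n) :
    (∃ (L : List (Op Cond)) (S' : Finset Cond),
        (∀ o ∈ L, o ∈ Ops n k γ) ∧ Reaches ∅ L S' ∧ ∀ j < k, Cond.C j ∈ S') ↔
      (∃ I : ℕ → Bool, ∀ j < k, ∃ l ∈ γ j, I l.1 = l.2) := by
  constructor
  · rintro ⟨L, S', hL, hR, hC⟩
    have h := fwd n k γ L ∅ S' hL hR (by simp) (by simp) (by simp)
    obtain ⟨hTF, hG⟩ := h
    refine ⟨fun i => decide (Cond.T i ∈ S'), ?_⟩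
    intro j hj
    obtain ⟨l, hl, hc⟩ := hG j hj (hC j hj)
    refine ⟨l, hl, ?_⟩
    unfold condOfLit at hc
    cases hb : l.2 <;> rw [hb] at hc <;> simp only [if_true, Bool.false_eq_true, if_false] at hc
    · simp only [decide_eq_false_iff_not]
      intro hT
      exact hTF l.1 ⟨hT, hc⟩
    · simpa using hc
  · rintro ⟨I, hsat⟩
    have hb1 := b1 I n 0
    simp only [Nat.zero_add, Finset.range_zero, Finset.image_empty] at hb1
    obtain ⟨L2, S', hL2, hR2, hSS', hC⟩ :=
      addClauses n k γ I hvars hsat k le_rfl ((Finset.range n).image (fI I)) subset_rfl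
    refine ⟨(List.range' 0 n).map (pick I) ++ L2, S', ?_, reaches_trans hb1 hR2, hC⟩
    intro o ho
    rcases List.mem_append.1 ho with h | h
    · simp only [List.mem_map, List.mem_range'_1] at h
      obtain ⟨i, hi, rfl⟩ := h
      unfold pick
      split
      · exact Or.inl ⟨i, by omega, rfl⟩
      · exact Or.inr (Or.inl ⟨i, by omega, rfl⟩)
    · exact hL2 o h
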